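/- Let P(q) = ∑_{j=0}^n q^j a_j be a quaternionic polynomial of degree n (so a_n ≠ 0). Then max_{|q| ≤ 1} |P'(q)| ≤ n · max_{|q| ≤ 1} |P(q)|. -/

import Mathlib

open Quaternion

namespace BQ

open Quaternion Real intervalIntegral Finset

noncomputable def u (I : ℍ[ℝ]) (t : ℝ) : ℍ[ℝ] := Real.cos t • 1 + Real.sin t • I

variable {I : ℍ[ℝ]}

theorem u_zero : u I 0 = 1 := by simp [u]

theorem continuous_u : Continuous (u I) := by
  unfold u; fun_prop

theorem u_add (hI : I * I = -1) (s t : ℝ) : u I (s + t) = u I s * u I t := by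
  unfold u
  rw [mul_add, add_mul, add_mul, smul_mul_smul_comm, smul_mul_smul_comm,
    smul_mul_smul_comm, smul_mul_smul_comm, hI, Real.cos_add, Real.sin_add]
  simp only [one_mul, mul_one]
  module

theorem u_star (hIre : I.re = 0) (t : ℝ) : star (u I t) = u I (-t) := by
  ext <;> simp [u, hIre]

theorem u_re (hIre : I.re = 0) (t : ℝ) : (u I t).re = Real.cos t := by
  simp [u, hIre]

theorem norm_u (hI : I * I = -1) (hIre : I.re = 0) (t : ℝ) : ‖u I t‖ = 1 := by
  have h1 : u I t * star (u I t) = 1 := by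
    rw [u_star hIre, ← u_add hI, add_neg_cancel, u_zero]
  have h2 : ‖u I t‖ * ‖u I t‖ = 1 := by
    rw [← Quaternion.normSq_eq_norm_mul_self, Quaternion.normSq_def, h1]; simp
  nlinarith [norm_nonneg (u I t)]

theorem commute_u {q : ℍ[ℝ]} (hq : Commute q I) (t : ℝ) : Commute q (u I t) :=
  ((Commute.one_right q).smul_right _).add_right (hq.smul_right _)

theorem mul_u_pow {q : ℍ[ℝ]} (hI : I * I = -1) (hq : Commute q I) (s : ℝ) (j : ℕ) :
    (q * u I s) ^ j = q ^ j * u I ((j : ℝ) * s) := by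
  induction j with
  | zero => simp [u_zero]
  | succ m ih =>
    have h1 : ((m + 1 : ℕ) : ℝ) * s = (m : ℝ) * s + s := by push_cast; ring
    have hc : u I ((m : ℝ) * s) * q = q * u I ((m : ℝ) * s) := ((commute_u hq _).eq).symm
    rw [pow_succ, ih, h1, u_add hI, pow_succ, mul_assoc (q ^ m),
      ← mul_assoc (u I ((m : ℝ) * s)) q (u I s), hc, mul_assoc q, ← mul_assoc]

theorem intCos (m : ℤ) :
    ∫ t in (0:ℝ)..(2*π), Real.cos ((m : ℝ) * t) = if m = 0 then 2*π else 0 := by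
  rcases eq_or_ne m 0 with hm | hm
  · simp [hm]
  · have hm' : (m : ℝ) ≠ 0 := Int.cast_ne_zero.2 hm
    rw [if_neg hm, intervalIntegral.integral_comp_mul_left Real.cos hm', integral_cos]
    have h1 : Real.sin ((m : ℝ) * (2*π)) = 0 := by
      have : (m : ℝ) * (2*π) = ((2*m : ℤ) : ℝ) * π := by push_cast; ring
      rw [this, Real.sin_int_mul_pi]
    simp [h1]

theorem intSin (m : ℤ) :
    ∫ t in (0:ℝ)..(2*π), Real.sin ((m : ℝ) * t) = 0 := by
  rcases eq_or_ne m 0 with hm | hm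
  · simp [hm]
  · have hm' : (m : ℝ) ≠ 0 := Int.cast_ne_zero.2 hm
    rw [intervalIntegral.integral_comp_mul_left Real.sin hm', integral_sin]
    have h1 : Real.cos ((m : ℝ) * (2*π)) = 1 := by
      rw [show (m : ℝ) * (2*π) = ((m : ℤ) : ℝ) * (2*π) by push_cast; ring,
        Real.cos_int_mul_two_pi]
    simp [h1]

theorem cont_cos_mul (c : ℝ) : Continuous fun t : ℝ => Real.cos (c * t) := by fun_prop

theorem cont_cos_smul (c : ℝ) (A : ℍ[ℝ]) :
    Continuous fun t : ℝ => Real.cos (c * t) • A := by fun_prop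

theorem cont_sin_smul (c : ℝ) (A : ℍ[ℝ]) :
    Continuous fun t : ℝ => Real.sin (c * t) • A := by fun_prop

theorem termInt (A B : ℍ[ℝ]) (m : ℤ) :
    ∫ t in (0:ℝ)..(2*π), (Real.cos ((m : ℝ) * t) • A + Real.sin ((m : ℝ) * t) • B)
      = (if m = 0 then 2*π else 0) • A := by
  rw [intervalIntegral.integral_add ((cont_cos_smul _ _).intervalIntegrable _ _)
      ((cont_sin_smul _ _).intervalIntegrable _ _),
    intervalIntegral.integral_smul_const, intervalIntegral.integral_smul_const,
    intCos, intSin, zero_smul, add_zero]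

theorem mulForm (hIre : I.re = 0) (x y : ℍ[ℝ]) (c : ℝ) :
    x * u I c * y = Real.cos c • (x * y) + Real.sin c • (x * (I * y)) := by
  unfold u
  rw [mul_add, add_mul, mul_smul_comm, smul_mul_assoc, mul_smul_comm, smul_mul_assoc]
  rw [mul_one, mul_assoc]

theorem re_sum {β : Type*} (s : Finset β) (g : β → ℍ[ℝ]) :
    (∑ x ∈ s, g x).re = ∑ x ∈ s, (g x).re :=
  map_sum (QuaternionAlgebra.reₗ (-1 : ℝ) 0 (-1)) g s

theorem countLemma (n j : ℕ) (hj : j ≤ n) :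
    (∑ k ∈ Finset.range n, ∑ l ∈ Finset.range n,
      (if ((n : ℤ) + k - l - j = 0) then (1:ℝ) else 0)) = j := by
  have inner : ∀ k ∈ Finset.range n,
      (∑ l ∈ Finset.range n, (if ((n : ℤ) + k - l - j = 0) then (1:ℝ) else 0))
        = if k < j then 1 else 0 := by
    intro k hk
    rcases lt_or_ge k j with hkj | hkj
    · rw [if_pos hkj, Finset.sum_eq_single_of_mem (n + k - j)
        (Finset.mem_range.2 (by omega)) ?_, if_pos (by omega)]
      intro b hb hbne
      rw [Finset.mem_range] at hb
      rw [if_neg (by omega)]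
    · rw [if_neg (not_lt.2 hkj)]
      apply Finset.sum_eq_zero
      intro l hl
      rw [Finset.mem_range] at hl
      rw [if_neg (by omega)]
  rw [Finset.sum_congr rfl inner]
  have hfilter : (Finset.range n).filter (fun k => k < j) = Finset.range j := by
    ext x; simp only [Finset.mem_filter, Finset.mem_range]; omega
  rw [← Finset.sum_filter, hfilter]
  simp

theorem keyA (n : ℕ) (a : ℕ → ℍ[ℝ]) {M : ℝ} (I q : ℍ[ℝ]) (hI : I * I = -1)
    (hIre : I.re = 0) (hq : Commute q I) (hqn : ‖q‖ ≤ 1)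
    (H : ∀ w : ℍ[ℝ], ‖w‖ ≤ 1 → ‖∑ j ∈ Finset.range (n+1), w ^ j * a j‖ ≤ M) :
    ‖∑ j ∈ Finset.range (n+1), (j : ℝ) • (q ^ j * a j)‖ ≤ n * M := by
  have hM : 0 ≤ M := le_trans (norm_nonneg _) (H 0 (by simp))
  set D : ℝ → ℍ[ℝ] := fun t => ∑ k ∈ Finset.range n, u I ((k:ℝ)*t) with hD
  set P : ℝ → ℍ[ℝ] := fun t => ∑ j ∈ Finset.range (n+1), (q * u I (-t)) ^ j * a j with hP
  set c : ℝ → ℝ := fun t => ∑ k ∈ Finset.range n, ∑ l ∈ Finset.range n,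
      Real.cos ((((k : ℤ) - l : ℤ) : ℝ) * t) with hcdef
  set F : ℝ → ℍ[ℝ] := fun t => ∑ j ∈ Finset.range (n+1), ∑ k ∈ Finset.range n,
      ∑ l ∈ Finset.range n,
      (Real.cos ((((n:ℤ) + k - l - j : ℤ) : ℝ) * t) • (q ^ j * a j)
        + Real.sin ((((n:ℤ) + k - l - j : ℤ) : ℝ) * t) • (q ^ j * (I * a j))) with hF
  have h1 : ∀ t : ℝ, D t * star (D t) = ∑ k ∈ Finset.range n, ∑ l ∈ Finset.range n,
      u I ((k:ℝ)*t - (l:ℝ)*t) := by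
    intro t
    rw [hD]
    rw [star_sum, Finset.sum_mul_sum]
    refine Finset.sum_congr rfl fun k _ => Finset.sum_congr rfl fun l _ => ?_
    rw [u_star hIre, ← u_add hI, sub_eq_add_neg]
  have hc : ∀ t : ℝ, D t * star (D t) = ((c t : ℝ) : ℍ[ℝ]) := by
    intro t
    rw [Quaternion.mul_star_eq_coe]
    congr 1
    rw [h1 t, re_sum, hcdef]
    refine Finset.sum_congr rfl fun k _ => ?_
    rw [re_sum]
    refine Finset.sum_congr rfl fun l _ => ?_
    rw [u_re hIre]
    congr 1
    push_cast
    ring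
  have hcpos : ∀ t : ℝ, 0 ≤ c t := by
    intro t
    have h2 : normSq (D t) = c t := by
      rw [Quaternion.normSq_def, hc t, Quaternion.re_coe]
    rw [← h2]
    exact normSq_nonneg
  have hprod : ∀ t : ℝ, u I ((n:ℝ)*t) * (D t * star (D t)) * P t = F t := by
    intro t
    rw [h1 t, hP, hF]
    simp only [Finset.mul_sum, Finset.sum_mul]
    refine Finset.sum_congr rfl fun j hj => Finset.sum_congr rfl fun k _ =>
      Finset.sum_congr rfl fun l _ => ?_
    rw [mul_u_pow hI hq]
    have hcj : u I ((n:ℝ)*t + ((k:ℝ)*t - (l:ℝ)*t)) * q ^ j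
        = q ^ j * u I ((n:ℝ)*t + ((k:ℝ)*t - (l:ℝ)*t)) :=
      (((commute_u hq _).pow_left j).eq).symm
    calc u I ((n:ℝ)*t) * u I ((k:ℝ)*t - (l:ℝ)*t) * (q ^ j * u I ((j:ℝ) * (-t)) * a j)
        = u I ((n:ℝ)*t + ((k:ℝ)*t - (l:ℝ)*t)) * q ^ j * (u I ((j:ℝ) * (-t)) * a j) := by
          rw [← u_add hI, mul_assoc, mul_assoc]
      _ = q ^ j * u I ((n:ℝ)*t + ((k:ℝ)*t - (l:ℝ)*t) + (j:ℝ) * (-t)) * a j := by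
          rw [hcj, u_add hI ((n:ℝ)*t + ((k:ℝ)*t - (l:ℝ)*t)) ((j:ℝ) * (-t)),
            mul_assoc, mul_assoc, mul_assoc]
      _ = q ^ j * u I ((((n:ℤ) + k - l - j : ℤ) : ℝ) * t) * a j := by
          congr 2
          push_cast
          ring
      _ = _ := mulForm hIre _ _ _
  have hcont : ∀ (m : ℤ) (A B : ℍ[ℝ]), Continuous fun t : ℝ =>
      Real.cos ((m : ℝ) * t) • A + Real.sin ((m : ℝ) * t) • B :=
    fun m A B => (cont_cos_smul _ _).add (cont_sin_smul _ _)
  have hint : ∫ t in (0:ℝ)..(2*π), F t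
      = (2*π) • ∑ j ∈ Finset.range (n+1), (j : ℝ) • (q ^ j * a j) := by
    rw [hF]
    rw [intervalIntegral.integral_finset_sum (fun j _ => ((continuous_finset_sum _ fun k _ =>
      continuous_finset_sum _ fun l _ => hcont _ _ _).intervalIntegrable _ _))]
    have step1 : ∀ j ∈ Finset.range (n+1),
        (∫ t in (0:ℝ)..(2*π), ∑ k ∈ Finset.range n, ∑ l ∈ Finset.range n,
          (Real.cos ((((n:ℤ) + k - l - j : ℤ) : ℝ) * t) • (q ^ j * a j)
            + Real.sin ((((n:ℤ) + k - l - j : ℤ) : ℝ) * t) • (q ^ j * (I * a j))))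
          = ((2*π) * (j:ℝ)) • (q ^ j * a j) := by
      intro j hj
      rw [intervalIntegral.integral_finset_sum (fun k _ => ((continuous_finset_sum _
        fun l _ => hcont _ _ _).intervalIntegrable _ _))]
      have step2 : ∀ k ∈ Finset.range n,
          (∫ t in (0:ℝ)..(2*π), ∑ l ∈ Finset.range n,
            (Real.cos ((((n:ℤ) + k - l - j : ℤ) : ℝ) * t) • (q ^ j * a j)
              + Real.sin ((((n:ℤ) + k - l - j : ℤ) : ℝ) * t) • (q ^ j * (I * a j))))
            = ∑ l ∈ Finset.range n,
                (if ((n:ℤ) + k - l - j = 0) then 2*π else 0) • (q ^ j * a j) := by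
        intro k _
        rw [intervalIntegral.integral_finset_sum (fun l _ =>
          (hcont _ _ _).intervalIntegrable _ _)]
        exact Finset.sum_congr rfl fun l _ => termInt _ _ _
      rw [Finset.sum_congr rfl step2]
      have step3 : ∀ k ∈ Finset.range n,
          (∑ l ∈ Finset.range n, (if ((n:ℤ) + k - l - j = 0) then 2*π else 0) • (q ^ j * a j))
            = (∑ l ∈ Finset.range n, if ((n:ℤ) + k - l - j = 0) then 2*π else 0)
                • (q ^ j * a j) :=
        fun k _ => (Finset.sum_smul).symm
      rw [Finset.sum_congr rfl step3, ← Finset.sum_smul]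
      congr 1
      have h4 : ∀ (k l : ℕ), (if ((n:ℤ) + k - l - j = 0) then (2*π:ℝ) else 0)
          = (2*π) * (if ((n:ℤ) + k - l - j = 0) then (1:ℝ) else 0) := by
        intro k l; split_ifs <;> ring
      simp only [h4, ← Finset.mul_sum]
      rw [countLemma n j (by have := Finset.mem_range.1 hj; omega)]
    rw [Finset.sum_congr rfl step1, Finset.smul_sum]
    exact Finset.sum_congr rfl fun j _ => (mul_smul _ _ _)
  have hccont : Continuous c := by
    rw [hcdef]
    exact continuous_finset_sum _ fun k _ => continuous_finset_sum _ fun l _ =>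
      cont_cos_mul _
  have hnorm : ‖∫ t in (0:ℝ)..(2*π), F t‖ ≤ |∫ t in (0:ℝ)..(2*π), c t * M| := by
    apply intervalIntegral.norm_integral_le_abs_of_norm_le
    · apply MeasureTheory.ae_of_all
      intro t
      rw [← hprod t, hc t, norm_mul, norm_mul, norm_u hI hIre, Quaternion.norm_coe, one_mul,
        Real.norm_eq_abs, abs_of_nonneg (hcpos t)]
      apply mul_le_mul_of_nonneg_left _ (hcpos t)
      apply H
      rw [norm_mul, norm_u hI hIre, mul_one]
      exact hqn
    · exact (hccont.mul continuous_const).intervalIntegrable _ _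
  have hgint : ∫ t in (0:ℝ)..(2*π), c t * M = ((n : ℝ) * (2*π)) * M := by
    rw [intervalIntegral.integral_mul_const]
    congr 1
    simp only [hcdef]
    rw [intervalIntegral.integral_finset_sum (fun k _ => ((continuous_finset_sum _
      fun l _ => cont_cos_mul _).intervalIntegrable _ _))]
    have step5 : ∀ k ∈ Finset.range n,
        (∫ t in (0:ℝ)..(2*π), ∑ l ∈ Finset.range n, Real.cos ((((k : ℤ) - l : ℤ) : ℝ) * t))
          = 2*π := by
      intro k hk
      rw [intervalIntegral.integral_finset_sum (fun l _ =>
        (cont_cos_mul _).intervalIntegrable _ _)]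
      have h5 : ∀ l ∈ Finset.range n,
          (∫ t in (0:ℝ)..(2*π), Real.cos ((((k : ℤ) - l : ℤ) : ℝ) * t))
            = if ((k : ℤ) - l = 0) then 2*π else 0 := fun l _ => intCos _
      rw [Finset.sum_congr rfl h5]
      have h6 : ∀ l ∈ Finset.range n, ((if ((k : ℤ) - l = 0) then (2*π:ℝ) else 0))
          = if l = k then 2*π else 0 :=
        fun l _ => if_congr (by omega) rfl rfl
      rw [Finset.sum_congr rfl h6, Finset.sum_ite_eq' (Finset.range n) k (fun _ => 2*π),
        if_pos hk]
    rw [Finset.sum_congr rfl step5, Finset.sum_const, Finset.card_range, nsmul_eq_mul]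
  rw [hint, hgint, norm_smul, Real.norm_eq_abs, abs_of_pos Real.two_pi_pos,
    abs_of_nonneg (by positivity)] at hnorm
  have hπ := Real.pi_pos
  nlinarith [norm_nonneg (∑ j ∈ Finset.range (n+1), (j:ℝ) • (q ^ j * a j))]

theorem keyB (n : ℕ) (a : ℕ → ℍ[ℝ]) {M : ℝ} (I q : ℍ[ℝ]) (hI : I * I = -1)
    (hIre : I.re = 0) (hq : Commute q I) (hqn : ‖q‖ = 1)
    (H : ∀ w : ℍ[ℝ], ‖w‖ ≤ 1 → ‖∑ j ∈ Finset.range (n+1), w ^ j * a j‖ ≤ M) :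
    ‖∑ j ∈ Finset.range (n+1), q ^ (j-1) * (j : ℍ[ℝ]) * a j‖ ≤ n * M := by
  have hsq : star q * q = 1 := by
    have h1 : normSq q = 1 := by
      rw [Quaternion.normSq_eq_norm_mul_self, hqn, one_mul]
    have h2 : star q * q = ((normSq (star q) : ℝ) : ℍ[ℝ]) := by
      rw [Quaternion.normSq_def, star_star]
      exact Quaternion.star_mul_eq_coe q
    rw [h2, Quaternion.normSq_star, h1, Quaternion.coe_one]
  have key := keyA n a I q hI hIre hq (le_of_eq hqn) H
  have heq : ∑ j ∈ Finset.range (n+1), q ^ (j-1) * (j : ℍ[ℝ]) * a j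
      = star q * ∑ j ∈ Finset.range (n+1), (j : ℝ) • (q ^ j * a j) := by
    rw [Finset.mul_sum]
    refine Finset.sum_congr rfl fun j _ => ?_
    cases j with
    | zero => simp
    | succ m =>
      calc q ^ (m+1-1) * ((m+1 : ℕ) : ℍ[ℝ]) * a (m+1)
          = ((m+1 : ℕ) : ℝ) • (q ^ m * a (m+1)) := by
            rw [Nat.add_sub_cancel,
              show ((m+1 : ℕ) : ℍ[ℝ]) = (((m+1 : ℕ) : ℝ) : ℍ[ℝ]) by norm_cast,
              Quaternion.mul_coe_eq_smul, smul_mul_assoc]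
        _ = star q * (((m+1 : ℕ) : ℝ) • (q ^ (m+1) * a (m+1))) := by
            rw [mul_smul_comm]
            congr 1
            rw [pow_succ', ← mul_assoc, ← mul_assoc, hsq, one_mul]
  rw [heq, norm_mul, Quaternion.norm_star, hqn, one_mul]
  exact key

theorem pure_norm (hI : I * I = -1) (hIre : I.re = 0) :
    I.imI^2 + I.imJ^2 + I.imK^2 = 1 := by
  have h := congrArg QuaternionAlgebra.re hI
  rw [Quaternion.re_mul] at h
  simp only [Quaternion.re_neg, Quaternion.re_one, hIre] at h
  nlinarith [h]

noncomputable def psi (I x : ℍ[ℝ]) : ℂ := (x.re : ℂ) + ((-(I*x).re : ℝ) : ℂ) * Complex.I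

theorem psi_re (x : ℍ[ℝ]) : (psi I x).re = x.re := by simp [psi]

theorem psi_im (x : ℍ[ℝ]) : (psi I x).im = -(I*x).re := by simp [psi]

theorem psi_coe (hIre : I.re = 0) (r : ℝ) : psi I ((r : ℝ) : ℍ[ℝ]) = (r : ℂ) := by
  apply Complex.ext
  · simp [psi_re]
  · rw [psi_im, Quaternion.mul_coe_eq_smul]
    simp [hIre]

theorem psi_add (x y : ℍ[ℝ]) : psi I (x + y) = psi I x + psi I y := by
  apply Complex.ext <;> simp [psi_re, psi_im, mul_add] <;> ring

theorem psi_smul (r : ℝ) (x : ℍ[ℝ]) : psi I (r • x) = r • psi I x := by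
  apply Complex.ext <;> simp [psi_re, psi_im, mul_smul_comm] <;> ring

theorem psi_I_mul (hI : I * I = -1) (x : ℍ[ℝ]) : psi I (I * x) = Complex.I * psi I x := by
  apply Complex.ext
  · rw [psi_re]
    simp [psi_re, psi_im]
  · rw [psi_im, ← mul_assoc, hI]
    simp [psi_re, psi_im]

theorem psi_sum {β : Type*} (s : Finset β) (g : β → ℍ[ℝ]) :
    psi I (∑ x ∈ s, g x) = ∑ x ∈ s, psi I (g x) := by
  classical
  induction s using Finset.induction_on with
  | empty => apply Complex.ext <;> simp [psi_re, psi_im]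
  | insert _ _ h ih => rw [Finset.sum_insert h, Finset.sum_insert h, psi_add, ih]

theorem psi_norm (hI : I * I = -1) (hIre : I.re = 0) (x : ℍ[ℝ]) :
    ‖psi I x‖ ≤ ‖x‖ := by
  have hb := pure_norm hI hIre
  have h1 : (‖psi I x‖)^2 ≤ ‖x‖^2 := by
    rw [Complex.sq_norm, Complex.normSq_apply, psi_re, psi_im, sq,
      ← Quaternion.normSq_eq_norm_mul_self, Quaternion.normSq_def', Quaternion.re_mul, hIre]
    nlinarith [sq_nonneg (I.imI * x.imJ - I.imJ * x.imI),
      sq_nonneg (I.imI * x.imK - I.imK * x.imI), sq_nonneg (I.imJ * x.imK - I.imK * x.imJ)]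
  calc ‖psi I x‖ = √((‖psi I x‖)^2) :=
        (Real.sqrt_sq (norm_nonneg _)).symm
    _ ≤ √(‖x‖^2) := Real.sqrt_le_sqrt h1
    _ = ‖x‖ := Real.sqrt_sq (norm_nonneg _)

noncomputable def phi (I : ℍ[ℝ]) (z : ℂ) : ℍ[ℝ] := z.re • (1 : ℍ[ℝ]) + z.im • I

theorem phi_commute (z : ℂ) : Commute (phi I z) I :=
  (((Commute.one_left I).smul_left _).add_left ((Commute.refl I).smul_left _))

theorem phi_one : phi I 1 = 1 := by simp [phi]

theorem phi_mul (hI : I * I = -1) (z w : ℂ) : phi I (z * w) = phi I z * phi I w := by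
  unfold phi
  rw [mul_add, add_mul, add_mul, smul_mul_smul_comm, smul_mul_smul_comm,
    smul_mul_smul_comm, smul_mul_smul_comm, hI, Complex.mul_re, Complex.mul_im]
  simp only [one_mul, mul_one]
  module

theorem phi_pow (hI : I * I = -1) (z : ℂ) (m : ℕ) : (phi I z) ^ m = phi I (z ^ m) := by
  induction m with
  | zero => rw [pow_zero, pow_zero, phi_one]
  | succ k ih => rw [pow_succ, pow_succ, phi_mul hI, ih]

theorem norm_phi (hI : I * I = -1) (hIre : I.re = 0) (z : ℂ) :
    ‖phi I z‖ = ‖z‖ := by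
  have h1 : ‖phi I z‖^2 = ‖z‖^2 := by
    rw [sq, ← Quaternion.normSq_eq_norm_mul_self, Quaternion.normSq_def', Complex.sq_norm,
      Complex.normSq_apply]
    simp only [phi, Quaternion.re_add, Quaternion.imI_add, Quaternion.imJ_add,
      Quaternion.imK_add, Quaternion.re_smul, Quaternion.imI_smul, Quaternion.imJ_smul,
      Quaternion.imK_smul, Quaternion.re_one, Quaternion.imI_one, Quaternion.imJ_one,
      Quaternion.imK_one, hIre, smul_eq_mul]
    nlinarith [pure_norm hI hIre]
  calc ‖phi I z‖ = √(‖phi I z‖^2) := (Real.sqrt_sq (norm_nonneg _)).symm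
    _ = √(‖z‖^2) := by rw [h1]
    _ = ‖z‖ := Real.sqrt_sq (norm_nonneg _)

theorem psi_phi_mul (hI : I * I = -1) (z : ℂ) (x : ℍ[ℝ]) :
    psi I (phi I z * x) = z * psi I x := by
  have h1 : phi I z * x = z.re • x + z.im • (I * x) := by
    unfold phi
    rw [add_mul, smul_mul_assoc, smul_mul_assoc, one_mul]
  rw [h1, psi_add, psi_smul, psi_smul, psi_I_mul hI]
  apply Complex.ext <;> simp [Complex.mul_re, Complex.mul_im] <;> ring

theorem slice (q : ℍ[ℝ]) : ∃ (I : ℍ[ℝ]) (z : ℂ), I * I = -1 ∧ I.re = 0 ∧ phi I z = q ∧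
    ‖z‖ = ‖q‖ := by
  rcases eq_or_ne (‖q.im‖) 0 with h0 | h0
  · have him : q.im = 0 := norm_eq_zero.1 h0
    have h1 : q.imI = 0 := by have := congrArg QuaternionAlgebra.imI him; simpa using this
    have h2 : q.imJ = 0 := by have := congrArg QuaternionAlgebra.imJ him; simpa using this
    have h3 : q.imK = 0 := by have := congrArg QuaternionAlgebra.imK him; simpa using this
    refine ⟨(⟨0,1,0,0⟩ : ℍ[ℝ]), ⟨q.re, 0⟩, ?_, rfl, ?_, ?_⟩
    · show ((⟨0,1,0,0⟩ : ℍ[ℝ]) * ⟨0,1,0,0⟩) = -1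
      ext <;> simp [Quaternion.re_mul, Quaternion.imI_mul, Quaternion.imJ_mul,
        Quaternion.imK_mul]
    · ext <;> simp [phi, h1, h2, h3] <;> exact zero_mul _
    · have h4 : ‖q‖^2 = q.re^2 := by
        rw [sq, ← Quaternion.normSq_eq_norm_mul_self, Quaternion.normSq_def']
        simp [h1, h2, h3]
      have h5 : ‖(⟨q.re, 0⟩ : ℂ)‖ = |q.re| := by
        rw [Complex.norm_def, Complex.normSq_apply]
        simp [Real.sqrt_mul_self_eq_abs]
      rw [h5, ← Real.sqrt_sq_eq_abs, ← h4, Real.sqrt_sq (norm_nonneg q)]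
  · have him_re : q.im.re = 0 := Quaternion.re_im q
    have hstar : star q.im = -q.im := Quaternion.star_eq_neg.2 him_re
    have h4 : q.im = -star q.im := by rw [hstar, neg_neg]
    have h2 : q.im * q.im = -((normSq q.im : ℝ) : ℍ[ℝ]) := by
      calc q.im * q.im = q.im * -star q.im := by rw [← h4]
        _ = -(q.im * star q.im) := by rw [mul_neg]
        _ = -((normSq q.im : ℝ) : ℍ[ℝ]) := by
            rw [Quaternion.normSq_def]
            exact congrArg Neg.neg (Quaternion.mul_star_eq_coe q.im)
    refine ⟨‖q.im‖⁻¹ • q.im, ⟨q.re, ‖q.im‖⟩, ?_, ?_, ?_, ?_⟩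
    · have h5 : normSq q.im = ‖q.im‖ * ‖q.im‖ := Quaternion.normSq_eq_norm_mul_self _
      rw [smul_mul_smul_comm, h2, h5, smul_neg, Quaternion.smul_coe,
        show ‖q.im‖⁻¹ * ‖q.im‖⁻¹ * (‖q.im‖ * ‖q.im‖) = 1 by field_simp,
        Quaternion.coe_one]
    · simp [Quaternion.re_smul, him_re]
    · show q.re • (1 : ℍ[ℝ]) + ‖q.im‖ • (‖q.im‖⁻¹ • q.im) = q
      rw [smul_smul, mul_inv_cancel₀ h0, one_smul,
        show q.re • (1 : ℍ[ℝ]) = ((q.re : ℝ) : ℍ[ℝ]) by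
          rw [← Quaternion.coe_one, Quaternion.smul_coe, mul_one],
        Quaternion.re_add_im]
    · have h7 : ‖q.im‖^2 = q.imI^2 + q.imJ^2 + q.imK^2 := by
        rw [sq, ← Quaternion.normSq_eq_norm_mul_self, Quaternion.normSq_def']
        simp
      have h8 : ‖(⟨q.re, ‖q.im‖⟩ : ℂ)‖^2 = ‖q‖^2 := by
        rw [Complex.sq_norm, Complex.normSq_apply]
        have h9 : ‖q‖^2 = q.re^2 + (q.imI^2 + q.imJ^2 + q.imK^2) := by
          rw [sq, ← Quaternion.normSq_eq_norm_mul_self, Quaternion.normSq_def']; ring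
        rw [h9]
        show q.re * q.re + ‖q.im‖ * ‖q.im‖ = _
        nlinarith [h7]
      calc ‖(⟨q.re, ‖q.im‖⟩ : ℂ)‖ = √(‖(⟨q.re, ‖q.im‖⟩ : ℂ)‖^2) :=
            (Real.sqrt_sq (norm_nonneg _)).symm
        _ = √(‖q‖^2) := by rw [h8]
        _ = ‖q‖ := Real.sqrt_sq (norm_nonneg q)

theorem keyC (n : ℕ) (a : ℕ → ℍ[ℝ]) {M : ℝ}
    (H : ∀ w : ℍ[ℝ], ‖w‖ ≤ 1 → ‖∑ j ∈ Finset.range (n+1), w ^ j * a j‖ ≤ M)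
    (q : ℍ[ℝ]) (hq : ‖q‖ ≤ 1) :
    ‖∑ j ∈ Finset.range (n+1), q ^ (j-1) * (j : ℍ[ℝ]) * a j‖ ≤ n * M := by
  obtain ⟨I, z₀, hI, hIre, hphi, habs⟩ := slice q
  have hM : 0 ≤ M := le_trans (norm_nonneg _) (H 0 (by simp))
  set g : ℂ → ℍ[ℝ] :=
    fun z => ∑ j ∈ Finset.range (n+1), (phi I z) ^ (j-1) * (j : ℍ[ℝ]) * a j with hg
  have hb : ∀ z : ℂ, ‖z‖ = 1 → ‖g z‖ ≤ n * M := by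
    intro z hz
    exact keyB n a I (phi I z) hI hIre (phi_commute z)
      (by rw [norm_phi hI hIre, hz]) H
  set w : ℍ[ℝ] := star (g z₀) with hw
  set h : ℂ → ℂ :=
    fun z => ∑ j ∈ Finset.range (n+1), z ^ (j-1) * ((j : ℕ) : ℂ) * psi I (a j * w) with hh
  have hpoint : ∀ z : ℂ, h z = psi I (g z * w) := by
    intro z
    rw [hh, hg]
    simp only [Finset.sum_mul]
    rw [psi_sum]
    refine Finset.sum_congr rfl fun j _ => ?_
    have hterm : (phi I z) ^ (j-1) * (j : ℍ[ℝ]) * a j * w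
        = phi I (z ^ (j-1)) * ((j : ℝ) • (a j * w)) := by
      rw [phi_pow hI, show ((j : ℕ) : ℍ[ℝ]) = (((j : ℕ) : ℝ) : ℍ[ℝ]) by norm_cast,
        Quaternion.mul_coe_eq_smul, smul_mul_assoc, smul_mul_assoc, mul_smul_comm,
        mul_assoc]
    rw [hterm, psi_phi_mul hI, psi_smul]
    rw [show ((j : ℕ) : ℂ) = (((j : ℕ) : ℝ) : ℂ) by norm_cast]
    rw [mul_assoc, Complex.real_smul]
  have hdiff : Differentiable ℂ h := by
    rw [hh]
    apply Differentiable.fun_sum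
    intro j _
    exact ((differentiable_pow _).mul_const _).mul_const _
  have hmax : ‖h z₀‖ ≤ (n * M) * ‖w‖ := by
    have hz₀ : z₀ ∈ closure (Metric.ball (0:ℂ) 1) := by
      rw [closure_ball (0:ℂ) one_ne_zero]
      rw [Metric.mem_closedBall, dist_zero_right, habs]
      exact hq
    refine Complex.norm_le_of_forall_mem_frontier_norm_le Metric.isBounded_ball
      hdiff.diffContOnCl ?_ hz₀
    intro z hzf
    rw [frontier_ball (0:ℂ) one_ne_zero] at hzf
    have hz1 : ‖z‖ = 1 := by
      rw [mem_sphere_iff_norm, sub_zero] at hzf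
      exact hzf
    rw [hpoint z]
    calc ‖psi I (g z * w)‖ ≤ ‖g z * w‖ := psi_norm hI hIre _
      _ = ‖g z‖ * ‖w‖ := norm_mul _ _
      _ ≤ (n * M) * ‖w‖ := mul_le_mul_of_nonneg_right (hb z hz1) (norm_nonneg w)
  have hval : h z₀ = ((‖g z₀‖^2 : ℝ) : ℂ) := by
    rw [hpoint z₀, hw, Quaternion.mul_star_eq_coe, psi_coe hIre, ← Quaternion.normSq_def,
      Quaternion.normSq_eq_norm_mul_self, sq]
  rw [hval, Complex.norm_real, Real.norm_eq_abs, abs_of_nonneg (sq_nonneg _), hw, Quaternion.norm_star] at hmax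
  have hgq : g z₀ = ∑ j ∈ Finset.range (n+1), q ^ (j-1) * (j : ℍ[ℝ]) * a j := by
    simp only [hg, hphi]
  rw [← hgq]
  rcases eq_or_lt_of_le (norm_nonneg (g z₀)) with h10 | h10
  · rw [← h10]; positivity
  · nlinarith [hmax]

end BQ

/-- **Bernstein inequality** for quaternionic polynomials:
if `P(q) = ∑_{j=0}^n q^j a_j` has degree `n` (i.e. `a n ≠ 0`), then
`max_{‖q‖ ≤ 1} ‖P'(q)‖ ≤ n * max_{‖q‖ ≤ 1} ‖P(q)‖`, where
`P'(q) = ∑_{j=1}^n q^(j-1) * j * a_j`. -/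
theorem bernstein_quaternion (n : ℕ) (a : ℕ → ℍ[ℝ]) (han : a n ≠ 0) :
    sSup {y : ℝ | ∃ q : ℍ[ℝ], ‖q‖ ≤ 1 ∧
        y = ‖∑ j ∈ Finset.range (n + 1), q ^ (j - 1) * (j : ℍ[ℝ]) * a j‖} ≤
      n * sSup {y : ℝ | ∃ q : ℍ[ℝ], ‖q‖ ≤ 1 ∧
        y = ‖∑ j ∈ Finset.range (n + 1), q ^ j * a j‖} := by
  set M : ℝ := sSup {y : ℝ | ∃ q : ℍ[ℝ], ‖q‖ ≤ 1 ∧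
      y = ‖∑ j ∈ Finset.range (n + 1), q ^ j * a j‖} with hM
  have hbdd : BddAbove {y : ℝ | ∃ q : ℍ[ℝ], ‖q‖ ≤ 1 ∧
      y = ‖∑ j ∈ Finset.range (n + 1), q ^ j * a j‖} := by
    refine ⟨∑ j ∈ Finset.range (n + 1), ‖a j‖, ?_⟩
    rintro y ⟨q, hq, rfl⟩
    refine le_trans (norm_sum_le _ _) (Finset.sum_le_sum fun j _ => ?_)
    rw [norm_mul, norm_pow]
    exact mul_le_of_le_one_left (norm_nonneg _) (pow_le_one₀ (norm_nonneg q) hq)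
  have H : ∀ w : ℍ[ℝ], ‖w‖ ≤ 1 → ‖∑ j ∈ Finset.range (n + 1), w ^ j * a j‖ ≤ M :=
    fun w hw => le_csSup hbdd ⟨w, hw, rfl⟩
  have hM0 : 0 ≤ M := le_trans (norm_nonneg _) (H 0 (by simp))
  apply Real.sSup_le
  · rintro y ⟨q, hq, rfl⟩
    exact BQ.keyC n a H q hq
  · positivity
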